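/- For every integer n ≥ 2, the sum of double zeta values with both arguments even and of total weight 2n satisfies ∑_{k=1}^{n-1} ζ(2k, 2n-2k) = (3/4) ζ(2n). -/

import Mathlib

open Finset Filter Topology

set_option maxHeartbeats 1000000

/-- The Riemann zeta value `ζ(s) = ∑_{k>0} k^{-s}` for a natural number exponent. -/
noncomputable def zetaVal (s : ℕ) : ℝ := ∑' k : ℕ+, (1 : ℝ) / (k : ℝ) ^ s

/-- The double zeta value `ζ(s₁, s₂) = ∑_{k₁ > k₂ > 0} k₁^{-s₁} k₂^{-s₂}`. -/
noncomputable def doubleZeta (s₁ s₂ : ℕ) : ℝ :=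
  ∑' p : {p : ℕ+ × ℕ+ // p.2 < p.1}, (1 : ℝ) / ((p.1.1 : ℝ) ^ s₁ * (p.1.2 : ℝ) ^ s₂)


/-- harmonic-like partial sum -/
noncomputable def Hr (m : ℕ) : ℝ := ∑ j ∈ Finset.Ioc 0 m, (1:ℝ)/j

noncomputable def gN (b : ℕ) (a : ℕ) : ℝ :=
  if a = b ∨ a = 0 then 0 else 1/((a:ℝ)^2-(b:ℝ)^2)

lemma sumA {b N : ℕ} (hb : 0 < b) (hbN : b ≤ N) :
    ∑ a ∈ Ioc 0 N, (if a = b then 0 else 1/((a:ℝ)-b)) = Hr (N-b) - Hr (b-1) := by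
  rw [← Finset.sum_Ioc_consecutive _ (Nat.zero_le b) hbN]
  have h1 : ∑ a ∈ Ioc 0 b, (if a = b then 0 else 1/((a:ℝ)-b)) = -Hr (b-1) := by
    obtain ⟨c, rfl⟩ : ∃ c, b = c + 1 := ⟨b - 1, (Nat.succ_pred_eq_of_pos hb).symm⟩
    rw [Finset.sum_Ioc_succ_top (Nat.zero_le c), if_pos rfl, add_zero]
    simp only [Nat.add_sub_cancel]
    rw [Hr, ← Finset.sum_neg_distrib]
    refine Finset.sum_nbij' (fun a => c + 1 - a) (fun a => c + 1 - a) ?_ ?_ ?_ ?_ ?_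
    · intro a ha; simp only [mem_Ioc] at ha ⊢; omega
    · intro a ha; simp only [mem_Ioc] at ha ⊢; omega
    · intro a ha; simp only [mem_Ioc] at ha; omega
    · intro a ha; simp only [mem_Ioc] at ha; omega
    · intro a ha
      simp only [mem_Ioc] at ha
      rw [if_neg (by omega)]
      have : ((c + 1 - a : ℕ) : ℝ) = (c:ℝ) + 1 - a := by
        push_cast [Nat.cast_sub (by omega : a ≤ c + 1)]; ring
      rw [this]
      push_cast
      rw [show (a:ℝ) - ((c:ℝ)+1) = -(((c:ℝ)+1) - a) by ring, div_neg]
  have h2 : ∑ a ∈ Ioc b N, (if a = b then 0 else 1/((a:ℝ)-b)) = Hr (N-b) := by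
    rw [Hr]
    refine Finset.sum_nbij' (fun a => a - b) (fun a => a + b) ?_ ?_ ?_ ?_ ?_
    · intro a ha; simp only [mem_Ioc] at ha ⊢; omega
    · intro a ha; simp only [mem_Ioc] at ha ⊢; omega
    · intro a ha; simp only [mem_Ioc] at ha; omega
    · intro a ha; simp only [mem_Ioc] at ha; omega
    · intro a ha
      simp only [mem_Ioc] at ha
      rw [if_neg (by omega), Nat.cast_sub (by omega : b ≤ a)]
  rw [h1, h2]; ring

lemma sumB {b N : ℕ} : ∑ a ∈ Ioc 0 N, 1/((a:ℝ)+b) = Hr (N+b) - Hr b := by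
  have : ∑ a ∈ Ioc 0 N, 1/((a:ℝ)+b) = ∑ j ∈ Ioc b (N+b), (1:ℝ)/j := by
    refine Finset.sum_nbij' (fun a => a + b) (fun a => a - b) ?_ ?_ ?_ ?_ ?_
    · intro a ha; simp only [mem_Ioc] at ha ⊢; omega
    · intro a ha; simp only [mem_Ioc] at ha ⊢; omega
    · intro a ha; simp only [mem_Ioc] at ha; omega
    · intro a ha; simp only [mem_Ioc] at ha; omega
    · intro a ha; push_cast; ring_nf
  rw [this, Hr, Hr, ← Finset.sum_Ioc_consecutive _ (Nat.zero_le b) (Nat.le_add_left b N)]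
  ring

lemma partial_sum_gN {b N : ℕ} (hb : 0 < b) (hbN : b ≤ N) :
    ∑ a ∈ Ioc 0 N, gN b a
      = 3/(4*(b:ℝ)^2) - (1/(2*b)) * ∑ j ∈ Ioc (N-b) (N+b), (1:ℝ)/j := by
  have hbR : (0:ℝ) < b := by exact_mod_cast hb
  have key : ∀ a ∈ Ioc 0 N, gN b a
      = (1/(2*(b:ℝ))) * ((if a = b then 0 else 1/((a:ℝ)-b)) - 1/((a:ℝ)+b))
        + (if a = b then 1/(4*(b:ℝ)^2) else 0) := by
    intro a ha
    simp only [mem_Ioc] at ha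
    by_cases hab : a = b
    · subst hab
      rw [gN, if_pos (Or.inl rfl), if_pos rfl, if_pos rfl]
      field_simp
      ring
    · have haR : ((a:ℝ)) ≠ (b:ℝ) := by exact_mod_cast hab
      rw [gN, if_neg (by omega), if_neg hab, if_neg hab, add_zero]
      have h1 : (a:ℝ) - b ≠ 0 := sub_ne_zero.2 haR
      have h2 : (a:ℝ) + b ≠ 0 := by positivity
      have h3 : (a:ℝ)^2 - (b:ℝ)^2 ≠ 0 := by
        rw [show (a:ℝ)^2-(b:ℝ)^2 = ((a:ℝ)-b)*((a:ℝ)+b) by ring]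
        exact mul_ne_zero h1 h2
      field_simp
      ring
  rw [Finset.sum_congr rfl key, Finset.sum_add_distrib, Finset.sum_ite_eq' (Ioc 0 N) b,
    if_pos (by simp only [mem_Ioc]; omega), ← Finset.mul_sum, Finset.sum_sub_distrib,
    sumA hb hbN, sumB]
  have hsplit : Hr (N+b) - Hr (N-b) = ∑ j ∈ Ioc (N-b) (N+b), (1:ℝ)/j := by
    rw [Hr, Hr, ← Finset.sum_Ioc_consecutive _ (Nat.zero_le (N-b)) (by omega : N-b ≤ N+b)]
    ring
  have hb1 : Hr b - Hr (b-1) = 1/(b:ℝ) := by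
    obtain ⟨c, rfl⟩ : ∃ c, b = c + 1 := ⟨b - 1, (Nat.succ_pred_eq_of_pos hb).symm⟩
    rw [Hr, Hr, Finset.sum_Ioc_succ_top (Nat.zero_le c)]
    simp
  have : Hr (N - b) - Hr (b - 1) - (Hr (N + b) - Hr b)
      = 1/(b:ℝ) - ∑ j ∈ Ioc (N-b) (N+b), (1:ℝ)/j := by
    rw [← hb1, ← hsplit]; ring
  rw [this]
  field_simp
  ring


lemma gN_nonneg_of_gt {b a : ℕ} (h : b < a) : 0 ≤ gN b a := by
  rw [gN, if_neg (by omega)]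
  have : (b:ℝ) < (a:ℝ) := by exact_mod_cast h
  have : (0:ℝ) < (a:ℝ)^2 - (b:ℝ)^2 := by nlinarith [Nat.cast_nonneg (α := ℝ) b]
  positivity

lemma gN_le_of_ge {b a : ℕ} (hb : 0 < b) (h : 2*b ≤ a) : gN b a ≤ 4/(3*(a:ℝ)^2) := by
  have ha : 0 < a := by omega
  rw [gN, if_neg (by omega)]
  have hba : (2:ℝ)*(b:ℝ) ≤ (a:ℝ) := by exact_mod_cast h
  have hb0 : (0:ℝ) < b := by exact_mod_cast hb
  have ha0 : (0:ℝ) < a := by exact_mod_cast ha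
  have h1 : (3/4:ℝ) * (a:ℝ)^2 ≤ (a:ℝ)^2 - (b:ℝ)^2 := by nlinarith
  have h2 : (0:ℝ) < (a:ℝ)^2 - (b:ℝ)^2 := by nlinarith
  rw [div_le_div_iff₀ h2 (by positivity)]
  nlinarith

lemma summable_gN {b : ℕ} (hb : 0 < b) : Summable (gN b) := by
  rw [← summable_nat_add_iff (2*b)]
  have base : Summable (fun a : ℕ => (1:ℝ)/(a:ℝ)^2) := Real.summable_one_div_nat_pow.2 one_lt_two
  have base1 : Summable (fun a : ℕ => (4/3:ℝ) * (1/((a:ℝ)+1)^2)) := by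
    have := ((summable_nat_add_iff 1).2 base).mul_left (4/3:ℝ)
    refine this.congr fun a => ?_
    push_cast
    ring
  refine Summable.of_nonneg_of_le (fun a => gN_nonneg_of_gt (by omega)) (fun a => ?_) base1
  refine le_trans (gN_le_of_ge hb (by omega)) ?_
  have h1 : ((a:ℝ)+1) ≤ ((a + 2*b : ℕ):ℝ) := by
    push_cast
    have h : (1:ℝ) ≤ 2*(b:ℝ) := by exact_mod_cast (by omega : 1 ≤ 2*b)
    linarith
  have h2 : (0:ℝ) < ((a:ℝ)+1) := by positivity
  calc 4/(3*((a + 2*b:ℕ):ℝ)^2) ≤ 4/(3*((a:ℝ)+1)^2) := by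
        apply div_le_div_of_nonneg_left (by norm_num) (by positivity)
        nlinarith
    _ = 4/3 * (1/((a:ℝ)+1)^2) := by rw [div_mul_div_comm, mul_one]

lemma tendsto_gN {b : ℕ} (hb : 0 < b) :
    Tendsto (fun N => ∑ a ∈ range N, gN b a) atTop (𝓝 (3/(4*(b:ℝ)^2))) := by
  rw [← tendsto_add_atTop_iff_nat (b+1)]
  have hform : ∀ M : ℕ, ∑ a ∈ range (M + (b+1)), gN b a
      = 3/(4*(b:ℝ)^2) - (1/(2*(b:ℝ))) * ∑ j ∈ Ioc M (M+2*b), (1:ℝ)/j := by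
    intro M
    have h0 : range (M + (b+1)) = Ioc 0 (M+b) ∪ {0} := by
      ext x; simp [Finset.mem_range, Finset.mem_Ioc]; omega
    have h1 : ∑ a ∈ range (M + (b+1)), gN b a = ∑ a ∈ Ioc 0 (M+b), gN b a := by
      rw [h0, Finset.sum_union (by simp), Finset.sum_singleton, gN, if_pos (Or.inr rfl), add_zero]
    rw [h1, partial_sum_gN hb (by omega), show M+b-b = M from by omega,
      show M+b+b = M+2*b from by omega]
  simp only [hform]
  have hz : Tendsto (fun M : ℕ => (1/(2*(b:ℝ))) * ∑ j ∈ Ioc M (M+2*b), (1:ℝ)/j) atTop (𝓝 0) := by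
    rw [show (0:ℝ) = (1/(2*(b:ℝ))) * 0 by ring]
    apply Tendsto.const_mul
    refine squeeze_zero (g := fun M : ℕ => (2*b : ℕ) • (1/((M:ℝ)+1)))
      (fun M => Finset.sum_nonneg fun j _ => by positivity) (fun M => ?_) ?_
    · have hcard : (Ioc M (M+2*b)).card = 2*b := by rw [Nat.card_Ioc]; omega
      refine le_trans (Finset.sum_le_card_nsmul _ _ (1/((M:ℝ)+1)) ?_) ?_
      · intro j hj
        simp only [mem_Ioc] at hj
        apply div_le_div_of_nonneg_left one_pos.le (by positivity)
        exact_mod_cast Nat.succ_le_of_lt hj.1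
      · rw [hcard]
    · simp only [nsmul_eq_mul]
      rw [show (0:ℝ) = (2*b:ℕ) * 0 by ring]
      exact tendsto_one_div_add_atTop_nhds_zero_nat.const_mul _
  have := (tendsto_const_nhds (x := 3/(4*(b:ℝ)^2)) (f := atTop (α := ℕ))).sub hz
  simpa using this

lemma tsum_gN {b : ℕ} (hb : 0 < b) : HasSum (gN b) (3/(4*(b:ℝ)^2)) := by
  have hs := summable_gN hb
  have h1 := hs.hasSum.tendsto_sum_nat
  have h2 := tendsto_nhds_unique h1 (tendsto_gN hb)
  exact h2 ▸ hs.hasSum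

lemma hasSum_pnat_aux (b : ℕ+) :
    HasSum (fun a : ℕ+ => if a = b then 0 else 1/((a:ℝ)^2-(b:ℝ)^2)) (3/(4*(b:ℝ)^2)) := by
  have h := tsum_gN (b := (b:ℕ)) b.pos
  have hinj : Function.Injective (PNat.val) := fun a c h => PNat.coe_injective h
  have hvan : ∀ x ∉ Set.range (PNat.val), gN (b:ℕ) x = 0 := by
    intro x hx
    have hx0 : x = 0 := by
      by_contra h0
      exact hx ⟨⟨x, Nat.pos_of_ne_zero h0⟩, rfl⟩
    rw [hx0, gN, if_pos (Or.inr rfl)]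
  rw [← hinj.hasSum_iff hvan] at h
  refine h.congr_fun fun a => ?_
  show (if a = b then (0:ℝ) else 1/((a:ℝ)^2-(b:ℝ)^2)) = gN (b:ℕ) (a:ℕ)
  rw [gN]
  by_cases hab : a = b
  · rw [if_pos hab, if_pos (Or.inl (by exact_mod_cast congrArg PNat.val hab))]
  · rw [if_neg hab, if_neg (by push_neg; exact ⟨fun h => hab (PNat.coe_injective h), a.ne_zero⟩)]

lemma summable_pnat_sq : Summable (fun a : ℕ+ => (1:ℝ)/(a:ℝ)^2) := by
  have h := (Real.summable_one_div_nat_pow.2 one_lt_two).comp_injective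
    (fun a b h => PNat.coe_injective h : Function.Injective (PNat.val))
  refine h.congr fun a => ?_
  norm_cast

lemma summable_prod_sq :
    Summable (fun p : ℕ+ × ℕ+ => ((1:ℝ)/(p.1:ℝ)^2) * ((1:ℝ)/(p.2:ℝ)^2)) :=
  summable_pnat_sq.mul_of_nonneg summable_pnat_sq
    (fun a => by positivity) (fun a => by positivity)



def eLT : ℕ+ × ℕ+ ≃ {p : ℕ+ × ℕ+ // p.2 < p.1} where
  toFun q := ⟨(q.2 + q.1, q.2), PNat.lt_add_right q.2 q.1⟩
  invFun p := (p.1.1 - p.1.2, p.1.2)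
  left_inv q := by
    have h : (q.2 + q.1) - q.2 = q.1 := by
      apply PNat.coe_injective
      rw [PNat.sub_coe, if_pos (PNat.lt_add_right q.2 q.1)]
      simp
    simp [h]
  right_inv p := by
    obtain ⟨⟨a, b⟩, h⟩ := p
    simp only [Subtype.mk.injEq, Prod.mk.injEq]
    exact ⟨PNat.add_sub_of_lt h, trivial⟩

def eSwap : {p : ℕ+ × ℕ+ // p.2 < p.1} ≃ {p : ℕ+ × ℕ+ // p.1 < p.2} where
  toFun p := ⟨(p.1.2, p.1.1), p.2⟩
  invFun q := ⟨(q.1.2, q.1.1), q.2⟩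
  left_inv p := rfl
  right_inv q := rfl

lemma pnat_cast_pos (a : ℕ+) : (0:ℝ) < (a:ℝ) := by positivity
lemma pnat_cast_one_le (a : ℕ+) : (1:ℝ) ≤ (a:ℝ) := by exact_mod_cast a.one_le

lemma hsum_half₁ (E : ℕ) (hE : 2 ≤ E) :
    Summable (fun p : {p : ℕ+ × ℕ+ // p.2 < p.1} =>
      (1/(p.1.2:ℝ)^E) * (1/((p.1.1:ℝ)^2 - (p.1.2:ℝ)^2))) := by
  rw [← eLT.summable_iff]
  have key : ∀ q : ℕ+ × ℕ+,
      ((fun p : {p : ℕ+ × ℕ+ // p.2 < p.1} =>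
        (1/(p.1.2:ℝ)^E) * (1/((p.1.1:ℝ)^2 - (p.1.2:ℝ)^2))) ∘ eLT) q
      = (1/(q.2:ℝ)^E) * (1/(((q.2:ℝ)+(q.1:ℝ))^2 - (q.2:ℝ)^2)) := by
    intro q
    simp only [Function.comp_apply, eLT, Equiv.coe_fn_mk]
    push_cast
    ring
  have hW : ∀ q : ℕ+ × ℕ+, (q.1:ℝ)^2 ≤ ((q.2:ℝ)+(q.1:ℝ))^2 - (q.2:ℝ)^2 := by
    intro q
    have h1 := pnat_cast_pos q.1
    have h2 := pnat_cast_pos q.2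
    nlinarith
  have hWpos : ∀ q : ℕ+ × ℕ+, (0:ℝ) < ((q.2:ℝ)+(q.1:ℝ))^2 - (q.2:ℝ)^2 := by
    intro q
    have := hW q
    have := pow_pos (pnat_cast_pos q.1) 2
    linarith
  refine Summable.of_nonneg_of_le (fun q => ?_) (fun q => ?_)
    (summable_prod_sq.prod_symm.congr (fun q => rfl))
  · rw [key q]
    have := hWpos q
    positivity
  · rw [key q]
    show _ ≤ (1/(q.2:ℝ)^2) * (1/(q.1:ℝ)^2)
    have hb := pnat_cast_pos q.2
    have hd := pnat_cast_pos q.1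
    refine mul_le_mul ?_ ?_ (le_of_lt (one_div_pos.2 (hWpos q))) (by positivity)
    · apply one_div_le_one_div_of_le (by positivity)
      exact pow_le_pow_right₀ (pnat_cast_one_le q.2) hE
    · exact one_div_le_one_div_of_le (by positivity) (hW q)

lemma hsum_half₂ (E : ℕ) (hE : 2 ≤ E) :
    Summable (fun p : {p : ℕ+ × ℕ+ // p.2 < p.1} =>
      (1/(p.1.1:ℝ)^E) * (1/((p.1.1:ℝ)^2 - (p.1.2:ℝ)^2))) := by
  rw [← eLT.summable_iff]
  have key : ∀ q : ℕ+ × ℕ+,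
      ((fun p : {p : ℕ+ × ℕ+ // p.2 < p.1} =>
        (1/(p.1.1:ℝ)^E) * (1/((p.1.1:ℝ)^2 - (p.1.2:ℝ)^2))) ∘ eLT) q
      = (1/((q.2:ℝ)+(q.1:ℝ))^E) * (1/(((q.2:ℝ)+(q.1:ℝ))^2 - (q.2:ℝ)^2)) := by
    intro q
    simp only [Function.comp_apply, eLT, Equiv.coe_fn_mk]
    push_cast
    ring
  have hW : ∀ q : ℕ+ × ℕ+, (q.1:ℝ)^2 ≤ ((q.2:ℝ)+(q.1:ℝ))^2 - (q.2:ℝ)^2 := by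
    intro q
    have h1 := pnat_cast_pos q.1
    have h2 := pnat_cast_pos q.2
    nlinarith
  have hWpos : ∀ q : ℕ+ × ℕ+, (0:ℝ) < ((q.2:ℝ)+(q.1:ℝ))^2 - (q.2:ℝ)^2 := by
    intro q
    have := hW q
    have := pow_pos (pnat_cast_pos q.1) 2
    linarith
  refine Summable.of_nonneg_of_le (fun q => ?_) (fun q => ?_)
    (summable_prod_sq.prod_symm.congr (fun q => rfl))
  · rw [key q]
    have h1 := pnat_cast_pos q.1
    have h2 := pnat_cast_pos q.2
    have := hWpos q
    positivity
  · rw [key q]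
    show _ ≤ (1/(q.2:ℝ)^2) * (1/(q.1:ℝ)^2)
    have hb := pnat_cast_pos q.2
    have hd := pnat_cast_pos q.1
    refine mul_le_mul ?_ ?_ (le_of_lt (one_div_pos.2 (hWpos q))) (by positivity)
    · apply one_div_le_one_div_of_le (by positivity)
      calc (q.2:ℝ)^2 ≤ (q.2:ℝ)^E := pow_le_pow_right₀ (pnat_cast_one_le q.2) hE
        _ ≤ ((q.2:ℝ)+(q.1:ℝ))^E := by
            apply pow_le_pow_left₀ (le_of_lt hb)
            linarith
    · exact one_div_le_one_div_of_le (by positivity) (hW q)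
theorem even_double_zeta_sum (n : ℕ) (hn : 2 ≤ n) :
    ∑ k ∈ Finset.Icc 1 (n - 1), doubleZeta (2 * k) (2 * n - 2 * k)
      = (3 / 4) * zetaVal (2 * n) := by
  obtain ⟨m, rfl⟩ : ∃ m, n = m + 2 := ⟨n - 2, by omega⟩
  set T := {p : ℕ+ × ℕ+ // p.2 < p.1} with hT
  have hApos : ∀ a : ℕ+, (0:ℝ) < (a:ℝ) := fun a => by positivity
  have haone : ∀ a : ℕ+, (1:ℝ) ≤ (a:ℝ) := fun a => by exact_mod_cast a.one_le
  -- summability of each double zeta term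
  have hterm : ∀ k ∈ Finset.Icc 1 (m+2-1), Summable
      (fun p : T => (1:ℝ) / ((p.1.1:ℝ) ^ (2*k) * (p.1.2:ℝ) ^ (2*(m+2)-2*k))) := by
    intro k hk
    simp only [Finset.mem_Icc] at hk
    have hS : Summable (fun p : T => ((1:ℝ)/(p.1.1:ℝ)^2) * ((1:ℝ)/(p.1.2:ℝ)^2)) :=
      summable_prod_sq.subtype {p : ℕ+ × ℕ+ | p.2 < p.1}
    refine Summable.of_nonneg_of_le (fun p => by positivity) (fun p => ?_) hS
    · have h1 : (p.1.1:ℝ)^2 ≤ (p.1.1:ℝ)^(2*k) := pow_le_pow_right₀ (haone _) (by omega)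
      have h2 : (p.1.2:ℝ)^2 ≤ (p.1.2:ℝ)^(2*(m+2)-2*k) := pow_le_pow_right₀ (haone _) (by omega)
      rw [div_mul_div_comm, one_mul, div_le_div_iff₀ (by positivity) (by positivity), one_mul,
        one_mul]
      have hp1 := pow_pos (hApos p.1.1) 2
      have hp2 := pow_pos (hApos p.1.2) 2
      nlinarith
  -- swap finite sum and tsum
  have hswap : ∑ k ∈ Finset.Icc 1 (m+2-1), doubleZeta (2 * k) (2 * (m+2) - 2 * k)
      = ∑' p : T, ∑ k ∈ Finset.Icc 1 (m+2-1),
          (1:ℝ) / ((p.1.1:ℝ) ^ (2*k) * (p.1.2:ℝ) ^ (2*(m+2)-2*k)) := by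
    rw [Summable.tsum_finsetSum hterm]
    rfl
  rw [hswap]
  -- pointwise geometric-sum evaluation
  have hpoint : ∀ p : T, ∑ k ∈ Finset.Icc 1 (m+2-1),
      (1:ℝ) / ((p.1.1:ℝ) ^ (2*k) * (p.1.2:ℝ) ^ (2*(m+2)-2*k))
      = (1/(p.1.2:ℝ)^(2*(m+2)-2)) * (1/((p.1.1:ℝ)^2 - (p.1.2:ℝ)^2))
        - (1/(p.1.1:ℝ)^(2*(m+2)-2)) * (1/((p.1.1:ℝ)^2 - (p.1.2:ℝ)^2)) := by
    rintro ⟨⟨a, b⟩, hba⟩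
    simp only
    set A := (a:ℝ)^2 with hA
    set B := (b:ℝ)^2 with hB
    have hA0 : (0:ℝ) < A := by positivity
    have hB0 : (0:ℝ) < B := by positivity
    have hBA : B < A := by
      have h : (b:ℝ) < (a:ℝ) := by exact_mod_cast hba
      have := hApos b
      nlinarith
    have hr1 : B/A ≠ 1 := ne_of_lt ((div_lt_one hA0).2 hBA)
    have hstep : ∀ k ∈ Finset.Icc 1 (m+2-1),
        (1:ℝ) / ((a:ℝ) ^ (2*k) * (b:ℝ) ^ (2*(m+2)-2*k)) = (1/B^(m+2)) * (B/A)^k := by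
      intro k hk
      simp only [Finset.mem_Icc] at hk
      have h2nk : 2*(m+2)-2*k = 2*((m+2)-k) := by omega
      rw [h2nk, pow_mul, pow_mul, ← hA, ← hB]
      rw [← pow_sub_mul_pow B (show k ≤ m+2 by omega), div_pow]
      have e1 : A^k ≠ 0 := by positivity
      have e2 : B^k ≠ 0 := by positivity
      have e3 : B^(m+2-k) ≠ 0 := by positivity
      field_simp
    rw [Finset.sum_congr rfl hstep, ← Finset.mul_sum]
    have hIcc : Finset.Icc 1 (m+2-1) = Finset.Ico 1 (m+2) := by
      ext x; simp only [Finset.mem_Icc, Finset.mem_Ico]; omega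
    rw [hIcc, geom_sum_Ico hr1 (by omega : 1 ≤ m+2)]
    have e1 : A ≠ 0 := ne_of_gt hA0
    have e2 : B ≠ 0 := ne_of_gt hB0
    have e3 : A - B ≠ 0 := sub_ne_zero.2 hBA.ne'
    have e4 : B/A - 1 ≠ 0 := sub_ne_zero.2 hr1
    have e5 : B - A ≠ 0 := sub_ne_zero.2 hBA.ne
    have hexp : 2*(m+2)-2 = 2*(m+1) := by omega
    rw [hexp, pow_mul, pow_mul, ← hA, ← hB, div_pow, pow_one]
    have eA : A^(m+2) ≠ 0 := by positivity
    have eB : B^(m+2) ≠ 0 := by positivity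
    have eA1 : A^(m+1) ≠ 0 := by positivity
    have eB1 : B^(m+1) ≠ 0 := by positivity
    field_simp
    ring
  rw [tsum_congr hpoint]
  have h₁ := hsum_half₁ (2*(m+2)-2) (by omega)
  have h₂ := hsum_half₂ (2*(m+2)-2) (by omega)
  rw [Summable.tsum_sub h₁ h₂]
  set G : ℕ+ × ℕ+ → ℝ := fun q => if q.1 = q.2 then 0
    else (1/(q.2:ℝ)^(2*(m+2)-2)) * (1/((q.1:ℝ)^2-(q.2:ℝ)^2)) with hG
  set T' := {p : ℕ+ × ℕ+ // p.1 < p.2} with hT'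
  -- first sum is the sum of G over T
  have hGT : ∀ p : T, (1/(p.1.2:ℝ)^(2*(m+2)-2)) * (1/((p.1.1:ℝ)^2 - (p.1.2:ℝ)^2)) = G p.1 :=
    fun p => by simp only [hG]; rw [if_neg (ne_of_gt p.2)]
  -- second sum: reindex by the swap
  have hswap2 : ∑' p : T, (1/(p.1.1:ℝ)^(2*(m+2)-2)) * (1/((p.1.1:ℝ)^2 - (p.1.2:ℝ)^2))
      = ∑' q : T', (1/(q.1.2:ℝ)^(2*(m+2)-2)) * (1/((q.1.2:ℝ)^2 - (q.1.1:ℝ)^2)) :=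
    eSwap.tsum_eq (fun q : T' => (1/(q.1.2:ℝ)^(2*(m+2)-2)) * (1/((q.1.2:ℝ)^2 - (q.1.1:ℝ)^2)))
  have hGT' : ∀ q : T', (1/(q.1.2:ℝ)^(2*(m+2)-2)) * (1/((q.1.2:ℝ)^2 - (q.1.1:ℝ)^2))
      = -(G q.1) := by
    intro q
    simp only [hG]
    rw [if_neg (ne_of_lt q.2)]
    have h3 : (q.1.1:ℝ)^2-(q.1.2:ℝ)^2 ≠ 0 := by
      have h : (q.1.1:ℝ) < (q.1.2:ℝ) := by exact_mod_cast q.2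
      have h1 := hApos q.1.1
      have h2 := hApos q.1.2
      nlinarith
    have h4 : (q.1.2:ℝ)^2-(q.1.1:ℝ)^2 ≠ 0 := fun hc => h3 (by linarith [sub_eq_zero.1 hc, sub_eq_zero.2 (sub_eq_zero.1 hc).symm] )
    field_simp
    ring
  rw [tsum_congr hGT, hswap2, tsum_congr hGT', tsum_neg, sub_neg_eq_add]
  -- summabilities of G restricted to the two half planes
  have hGT₁ : Summable (fun p : T => G p.1) := h₁.congr hGT
  have hGT₂ : Summable (fun q : T' => G q.1) := by
    have hf : Summable (fun q : T' => (1/(q.1.2:ℝ)^(2*(m+2)-2)) * (1/((q.1.2:ℝ)^2 - (q.1.1:ℝ)^2))) := by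
      rw [← eSwap.summable_iff]
      exact h₂
    exact (hf.neg.congr fun q => by rw [hGT' q, neg_neg])
  -- indicator form
  have hi₁ : Summable (({p : ℕ+ × ℕ+ | p.2 < p.1}).indicator G) :=
    summable_subtype_iff_indicator.1 hGT₁
  have hi₂ : Summable (({p : ℕ+ × ℕ+ | p.1 < p.2}).indicator G) :=
    summable_subtype_iff_indicator.1 hGT₂
  have hGind : ∀ q : ℕ+ × ℕ+,
      ({p : ℕ+ × ℕ+ | p.2 < p.1}).indicator G q + ({p : ℕ+ × ℕ+ | p.1 < p.2}).indicator G q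
        = G q := by
    intro q
    rcases lt_trichotomy q.2 q.1 with h | h | h
    · rw [Set.indicator_of_mem (by exact h), Set.indicator_of_notMem (by simp; exact le_of_lt h)]
      ring
    · rw [Set.indicator_of_notMem (by simp [h]), Set.indicator_of_notMem (by simp [h]),
        hG]
      simp [h.symm]
    · rw [Set.indicator_of_notMem (by simp; exact le_of_lt h), Set.indicator_of_mem (by exact h)]
      ring
  have hGsum : Summable G := (hi₁.add hi₂).congr hGind
  have hcombine : (∑' p : T, G p.1) + (∑' q : T', G q.1) = ∑' q : ℕ+ × ℕ+, G q := by
    have e₁ : (∑' p : T, G p.1) = ∑' x, Set.indicator {p : ℕ+ × ℕ+ | p.2 < p.1} G x :=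
      tsum_subtype {p : ℕ+ × ℕ+ | p.2 < p.1} G
    have e₂ : (∑' q : T', G q.1) = ∑' x, Set.indicator {p : ℕ+ × ℕ+ | p.1 < p.2} G x :=
      tsum_subtype {p : ℕ+ × ℕ+ | p.1 < p.2} G
    rw [e₁, e₂, ← Summable.tsum_add hi₁ hi₂]
    exact tsum_congr hGind
  rw [hcombine]
  -- Fubini
  have hf1 : ∑' q : ℕ+ × ℕ+, G q = ∑' a : ℕ+, ∑' b : ℕ+, G (a, b) :=
    Summable.tsum_prod' hGsum (fun a => hGsum.prod_factor a)
  have hf2 : ∑' b : ℕ+, ∑' a : ℕ+, G (a, b) = ∑' a : ℕ+, ∑' b : ℕ+, G (a, b) :=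
    Summable.tsum_comm' hGsum (fun a => hGsum.prod_factor a) (fun b => hGsum.prod_symm.prod_factor b)
  rw [hf1, ← hf2]
  -- inner sums
  have hinner : ∀ b : ℕ+, ∑' a : ℕ+, G (a, b)
      = (1/(b:ℝ)^(2*(m+2)-2)) * (3/(4*(b:ℝ)^2)) := by
    intro b
    have hpt : ∀ a : ℕ+, G (a, b)
        = (1/(b:ℝ)^(2*(m+2)-2)) * (if a = b then 0 else 1/((a:ℝ)^2-(b:ℝ)^2)) := by
      intro a
      by_cases h : a = b <;> simp [hG, h]
    rw [tsum_congr hpt, tsum_mul_left, (hasSum_pnat_aux b).tsum_eq]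
  rw [tsum_congr hinner]
  -- final evaluation
  have hfin : ∀ b : ℕ+, (1/(b:ℝ)^(2*(m+2)-2)) * (3/(4*(b:ℝ)^2))
      = (3/4) * ((1:ℝ)/(b:ℝ)^(2*(m+2))) := by
    intro b
    have hb := hApos b
    have hpow : (b:ℝ)^(2*(m+2)) = (b:ℝ)^(2*(m+2)-2) * (b:ℝ)^2 := by
      have h22 : 2*(m+2)-2+2 = 2*(m+2) := by omega
      conv_lhs => rw [← h22]
      rw [pow_add]
    rw [hpow]
    have h1 : (b:ℝ)^(2*(m+2)-2) ≠ 0 := by positivity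
    have h2 : (b:ℝ)^2 ≠ 0 := by positivity
    field_simp
  rw [tsum_congr hfin, tsum_mul_left, zetaVal]
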